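/- Let 𝔄 be a C*-algebra and let S ⊆ 𝔄 be a star subalgebra. Then every nonzero closed two-sided ideal of 𝔄 has nonzero intersection with S if and only if for every C*-algebra B, every *-homomorphism π : 𝔄 → B whose restriction to S is injective is isometric on all of 𝔄. -/

import Mathlib

noncomputable section

variable {A : Type*} [CStarAlgebra A]

lemma key_approx (I : TwoSidedIdeal A) {c : A}
    (hcI : c ∈ I) (hsa : IsSelfAdjoint c) (hspec : ∀ t ∈ spectrum ℝ c, 0 ≤ t)
    {δ : ℝ} (hδ : 0 < δ) :
    ∃ e : A, e ∈ I ∧ IsSelfAdjoint e ∧ ‖1 - e‖ ≤ 1 ∧ ‖(1 - e) * c * (1 - e)‖ ≤ δ := by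
  have hcont0 : ContinuousOn (fun t : ℝ => (t + δ)⁻¹) (spectrum ℝ c) := by
    apply ContinuousOn.inv₀ (by fun_prop)
    intro t ht
    have := hspec t ht
    positivity
  have hcont : ContinuousOn (fun t : ℝ => t * (t + δ)⁻¹) (spectrum ℝ c) := by
    exact ContinuousOn.mul (by fun_prop) hcont0
  set e : A := cfc (fun t : ℝ => t * (t + δ)⁻¹) c with he
  have heI : e ∈ I := by
    have : e = c * cfc (fun t : ℝ => (t + δ)⁻¹) c := by
      conv_lhs => rw [he, cfc_mul (fun t : ℝ => t) _ c (by fun_prop) hcont0, cfc_id' ℝ c]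
    rw [this]
    exact I.mul_mem_right _ _ hcI
  have hesa : IsSelfAdjoint e := cfc_predicate _ c
  have hsub : (1 : A) - e = cfc (fun t : ℝ => 1 - t * (t + δ)⁻¹) c := by
    rw [cfc_sub _ _ c (by fun_prop) hcont, cfc_const_one ℝ c]
  refine ⟨e, heI, hesa, ?_, ?_⟩
  · rw [hsub]
    refine norm_cfc_le zero_le_one fun t ht => ?_
    have ht0 := hspec t ht
    have h1 : (0:ℝ) < t + δ := by positivity
    rw [Real.norm_eq_abs, abs_le]
    constructor
    · have : t * (t + δ)⁻¹ ≤ 1 := by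
        rw [mul_inv_le_iff₀ h1]; linarith
      linarith
    · have : 0 ≤ t * (t + δ)⁻¹ := by positivity
      linarith
  · have key : cfc (fun t : ℝ => (1 - t * (t + δ)⁻¹) * t * (1 - t * (t + δ)⁻¹)) c
        = (1 - e) * c * (1 - e) := by
      rw [cfc_mul (fun t : ℝ => (1 - t * (t + δ)⁻¹) * t) (fun t : ℝ => 1 - t * (t + δ)⁻¹) c
        ((continuousOn_const.sub hcont).mul continuousOn_id)
        (continuousOn_const.sub hcont),
        cfc_mul (fun t : ℝ => 1 - t * (t + δ)⁻¹) (fun t : ℝ => t) c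
          (continuousOn_const.sub hcont) (by fun_prop), cfc_id' ℝ c, ← hsub]
    rw [← key]
    refine norm_cfc_le hδ.le fun t ht => ?_
    have ht0 := hspec t ht
    have h1 : (0:ℝ) < t + δ := by positivity
    have h2 : 1 - t * (t + δ)⁻¹ = δ * (t + δ)⁻¹ := by
      field_simp
      ring
    rw [h2, Real.norm_eq_abs, abs_of_nonneg (by positivity)]
    have hut : (t + δ)⁻¹ * t ≤ 1 := by
      rw [inv_mul_le_iff₀ h1]; linarith
    have hud : δ * (t + δ)⁻¹ ≤ 1 := by
      rw [mul_inv_le_iff₀ h1]; linarith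
    calc δ * (t + δ)⁻¹ * t * (δ * (t + δ)⁻¹)
        = δ * (((t + δ)⁻¹ * t) * (δ * (t + δ)⁻¹)) := by ring
      _ ≤ δ * (1 * 1) := by
          refine mul_le_mul_of_nonneg_left ?_ hδ.le
          exact mul_le_mul hut hud (by positivity) one_pos.le
      _ = δ := by ring


lemma key_approx' (I : TwoSidedIdeal A) {b : A} (hb : star b * b ∈ I) {ε : ℝ} (hε : 0 < ε) :
    ∃ e : A, e ∈ I ∧ IsSelfAdjoint e ∧ ‖1 - e‖ ≤ 1 ∧ ‖b * (1 - e)‖ ≤ ε := by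
  obtain ⟨e, heI, hesa, hne, hkey⟩ := key_approx I (c := star b * b)
    hb (IsSelfAdjoint.star_mul_self b)
    spectrum_star_mul_self_nonneg (δ := ε ^ 2) (by positivity)
  refine ⟨e, heI, hesa, hne, ?_⟩
  have h1 : IsSelfAdjoint ((1 : A) - e) := by
    exact IsSelfAdjoint.sub (by simp [IsSelfAdjoint, star_one]) hesa
  have h2 : ‖b * (1 - e)‖ * ‖b * (1 - e)‖ = ‖(1 - e) * (star b * b) * (1 - e)‖ := by
    rw [← CStarRing.norm_star_mul_self (x := b * (1 - e)), star_mul, h1.star_eq]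
    congr 1
    noncomm_ring
  nlinarith [norm_nonneg (b * (1 - e)), hkey, h2]

lemma star_mem_of_isClosed (I : TwoSidedIdeal A) (hI : IsClosed (I : Set A))
    {a : A} (ha : a ∈ I) : star a ∈ I := by
  have : star a ∈ closure (I : Set A) := by
    rw [Metric.mem_closure_iff]
    intro ε hε
    obtain ⟨e, heI, hesa, hne, hkey⟩ := key_approx' I (b := star a)
      (by simpa using I.mul_mem_right _ _ ha) (half_pos hε)
    refine ⟨star a * e, I.mul_mem_left _ _ heI, ?_⟩
    rw [dist_eq_norm]
    calc ‖star a - star a * e‖ = ‖star a * (1 - e)‖ := by rw [mul_sub, mul_one]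
      _ ≤ ε / 2 := hkey
      _ < ε := half_lt_self hε
  rwa [hI.closure_eq] at this

/-- The two-sided ideal as a `ℂ`-submodule. -/
def idealSubmodule (I : TwoSidedIdeal A) : Submodule ℂ A where
  carrier := I
  add_mem' := add_mem
  zero_mem' := zero_mem _
  smul_mem' c x hx := by
    rw [Algebra.smul_def]
    exact I.mul_mem_left _ _ hx

lemma mem_idealSubmodule (I : TwoSidedIdeal A) {x : A} :
    x ∈ idealSubmodule I ↔ x ∈ I := Iff.rfl

/-- A closed, star-closed two-sided ideal. -/
structure ClosedStarIdeal (A : Type*) [CStarAlgebra A] where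
  I : TwoSidedIdeal A
  closed : IsClosed (I : Set A)
  star_mem' : ∀ a ∈ I, star a ∈ I

namespace ClosedStarIdeal

variable {A : Type*} [CStarAlgebra A] (K : ClosedStarIdeal A)

/-- The quotient of `A` by a closed star-closed two-sided ideal. -/
def Q := A ⧸ idealSubmodule K.I

instance : SeminormedAddCommGroup K.Q :=
  (inferInstance : SeminormedAddCommGroup (A ⧸ idealSubmodule K.I))

instance : NormedAddCommGroup K.Q :=
  @Submodule.Quotient.normedAddCommGroup _ _ _ _ _ (idealSubmodule K.I) K.closed

instance : NormedSpace ℂ K.Q :=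
  (inferInstance : NormedSpace ℂ (A ⧸ idealSubmodule K.I))

instance : CompleteSpace K.Q :=
  (inferInstance : CompleteSpace (A ⧸ idealSubmodule K.I))

/-- Quotient map. -/
def qk (a : A) : K.Q := Submodule.Quotient.mk a

lemma qk_surjective : Function.Surjective K.qk :=
  Submodule.Quotient.mk_surjective _

lemma qk_eq_qk {a b : A} : K.qk a = K.qk b ↔ a - b ∈ K.I :=
  Submodule.Quotient.eq _

lemma qk_eq_zero {a : A} : K.qk a = 0 ↔ a ∈ K.I := by
  rw [show (0 : K.Q) = K.qk 0 from rfl, qk_eq_qk, sub_zero]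

lemma norm_qk_le (a : A) : ‖K.qk a‖ ≤ ‖a‖ :=
  Submodule.Quotient.norm_mk_le _ _

lemma norm_qk_lt (x : K.Q) {ε : ℝ} (hε : 0 < ε) :
    ∃ a : A, K.qk a = x ∧ ‖a‖ < ‖x‖ + ε :=
  Submodule.Quotient.norm_mk_lt x hε

instance : Mul K.Q where
  mul := Quotient.map₂' (· * ·) <| by
    intro a₁ a₂ h₁ b₁ b₂ h₂
    have h₁' : a₁ - a₂ ∈ K.I := (Submodule.quotientRel_def _).mp h₁
    have h₂' : b₁ - b₂ ∈ K.I := (Submodule.quotientRel_def _).mp h₂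
    refine (Submodule.quotientRel_def _).mpr ?_
    have : a₁ * b₁ - a₂ * b₂ = (a₁ - a₂) * b₁ + a₂ * (b₁ - b₂) := by noncomm_ring
    rw [this]
    exact K.I.add_mem (K.I.mul_mem_right _ _ h₁') (K.I.mul_mem_left _ _ h₂')

instance : One K.Q where
  one := K.qk 1

lemma qk_add (a b : A) : K.qk (a + b) = K.qk a + K.qk b := rfl

lemma qk_mul (a b : A) : K.qk (a * b) = K.qk a * K.qk b := rfl

lemma qk_one : K.qk 1 = 1 := rfl

lemma qk_zero : K.qk 0 = 0 := rfl

instance instRing : Ring K.Q where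
  __ := (inferInstance : AddCommGroup K.Q)
  mul_assoc x y z := by
    obtain ⟨a, rfl⟩ := K.qk_surjective x
    obtain ⟨b, rfl⟩ := K.qk_surjective y
    obtain ⟨c, rfl⟩ := K.qk_surjective z
    rw [← qk_mul, ← qk_mul, ← qk_mul, ← qk_mul, mul_assoc]
  one_mul x := by
    obtain ⟨a, rfl⟩ := K.qk_surjective x
    rw [← qk_one, ← qk_mul, one_mul]
  mul_one x := by
    obtain ⟨a, rfl⟩ := K.qk_surjective x
    rw [← qk_one, ← qk_mul, mul_one]
  left_distrib x y z := by
    obtain ⟨a, rfl⟩ := K.qk_surjective x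
    obtain ⟨b, rfl⟩ := K.qk_surjective y
    obtain ⟨c, rfl⟩ := K.qk_surjective z
    rw [← qk_add, ← qk_mul, ← qk_mul, ← qk_mul, mul_add, qk_add]
  right_distrib x y z := by
    obtain ⟨a, rfl⟩ := K.qk_surjective x
    obtain ⟨b, rfl⟩ := K.qk_surjective y
    obtain ⟨c, rfl⟩ := K.qk_surjective z
    rw [← qk_add, ← qk_mul, ← qk_mul, ← qk_mul, add_mul, qk_add]
  zero_mul x := by
    obtain ⟨a, rfl⟩ := K.qk_surjective x
    rw [← qk_zero, ← qk_mul, zero_mul]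
  mul_zero x := by
    obtain ⟨a, rfl⟩ := K.qk_surjective x
    rw [← qk_zero, ← qk_mul, mul_zero]

lemma qk_smul (c : ℂ) (a : A) : K.qk (c • a) = c • K.qk a :=
  Submodule.Quotient.mk_smul _ _ _

instance instAlgebra : Algebra ℂ K.Q := by
  refine Algebra.ofModule ?_ ?_
  · intro r x y
    obtain ⟨a, rfl⟩ := K.qk_surjective x
    obtain ⟨b, rfl⟩ := K.qk_surjective y
    rw [← qk_smul, ← qk_mul, ← qk_mul, ← qk_smul, smul_mul_assoc]
  · intro r x y
    obtain ⟨a, rfl⟩ := K.qk_surjective x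
    obtain ⟨b, rfl⟩ := K.qk_surjective y
    rw [← qk_smul, ← qk_mul, ← qk_mul, ← qk_smul, mul_smul_comm]

instance : StarRing K.Q where
  star := Quotient.map' star <| by
    intro a b h
    have h' : a - b ∈ K.I := (Submodule.quotientRel_def _).mp h
    refine (Submodule.quotientRel_def _).mpr ?_
    rw [← star_sub]
    exact K.star_mem' _ h'
  star_involutive x := by
    obtain ⟨a, rfl⟩ := K.qk_surjective x
    show K.qk (star (star a)) = K.qk a
    rw [star_star]
  star_mul x y := by
    obtain ⟨a, rfl⟩ := K.qk_surjective x
    obtain ⟨b, rfl⟩ := K.qk_surjective y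
    show K.qk (star (a * b)) = K.qk (star b) * K.qk (star a)
    rw [star_mul, qk_mul]
  star_add x y := by
    obtain ⟨a, rfl⟩ := K.qk_surjective x
    obtain ⟨b, rfl⟩ := K.qk_surjective y
    show K.qk (star (a + b)) = K.qk (star a) + K.qk (star b)
    rw [star_add, qk_add]

lemma qk_star (a : A) : K.qk (star a) = star (K.qk a) := rfl

instance : StarModule ℂ K.Q where
  star_smul c x := by
    obtain ⟨a, rfl⟩ := K.qk_surjective x
    rw [← qk_smul, ← qk_star, ← qk_star, ← qk_smul, star_smul]


instance instNormedRing : NormedRing K.Q where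
  __ := instRing K
  __ := (inferInstance : NormedAddCommGroup K.Q)
  dist_eq := fun x y => by rw [dist_eq_norm, ← norm_neg, neg_sub, sub_eq_neg_add]
  norm_mul_le x y := by
    refine le_of_forall_pos_le_add fun ε hε => ?_
    have hx0 : 0 ≤ ‖x‖ := norm_nonneg x
    have hy0 : 0 ≤ ‖y‖ := norm_nonneg y
    set ε' : ℝ := min 1 (ε / (‖x‖ + ‖y‖ + 1)) with hε'
    have hε'pos : 0 < ε' := lt_min one_pos (by positivity)
    have hεfix : ε' * (‖x‖ + ‖y‖ + 1) ≤ ε := by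
      rw [← le_div_iff₀ (by positivity)]
      exact min_le_right _ _
    have h3 : ε' ≤ 1 := min_le_left _ _
    clear_value ε'
    clear hε'
    obtain ⟨a, rfl, ha⟩ := K.norm_qk_lt x hε'pos
    obtain ⟨b, rfl, hb⟩ := K.norm_qk_lt y hε'pos
    have h1 : ‖K.qk a * K.qk b‖ ≤ ‖a‖ * ‖b‖ := by
      rw [← qk_mul]
      exact (K.norm_qk_le _).trans (norm_mul_le a b)
    have h2 : ‖a‖ * ‖b‖ ≤ (‖K.qk a‖ + ε') * (‖K.qk b‖ + ε') := by
      have := norm_nonneg a; have := norm_nonneg b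
      exact mul_le_mul ha.le hb.le (by positivity) (by positivity)
    refine (h1.trans h2).trans ?_
    have hx0' : 0 ≤ ‖K.qk a‖ := norm_nonneg _
    have hy0' : 0 ≤ ‖K.qk b‖ := norm_nonneg _
    nlinarith [hεfix]

instance instNormedAlgebra : NormedAlgebra ℂ K.Q where
  __ := instAlgebra K
  norm_smul_le c x := norm_smul_le c x

lemma norm_q_sq_le (x : K.Q) : ‖x‖ * ‖x‖ ≤ ‖star x * x‖ := by
  obtain ⟨a, rfl⟩ := K.qk_surjective x
  refine le_of_forall_pos_le_add fun ε hε => ?_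
  -- choose a representative `m` of `star a * a` of norm close to the quotient norm
  obtain ⟨m, hm, hmlt⟩ := K.norm_qk_lt (K.qk (star a * a)) (half_pos hε)
  set b : A := m - star a * a with hbdef
  have hbI : b ∈ K.I := by
    rw [qk_eq_qk] at hm
    exact hm
  -- choose an approximate unit element `e` adapted to `b`
  obtain ⟨e, heI, hesa, hne, hkey⟩ := key_approx' K.I (b := b)
    (K.I.mul_mem_left _ _ hbI) (hε := half_pos hε)
  have h1e : IsSelfAdjoint ((1 : A) - e) := by
    exact IsSelfAdjoint.sub (by simp [IsSelfAdjoint, star_one]) hesa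
  -- ‖qk a‖ ≤ ‖a * (1 - e)‖
  have step1 : ‖K.qk a‖ ≤ ‖a * (1 - e)‖ := by
    have : K.qk (a * (1 - e)) = K.qk a := by
      rw [qk_eq_qk]
      have : a * (1 - e) - a = -(a * e) := by noncomm_ring
      rw [this]
      exact neg_mem (K.I.mul_mem_left _ _ heI)
    calc ‖K.qk a‖ = ‖K.qk (a * (1 - e))‖ := by rw [this]
      _ ≤ ‖a * (1 - e)‖ := K.norm_qk_le _
  -- ‖a (1-e)‖² = ‖(1-e)(star a * a)(1-e)‖
  have step2 : ‖a * (1 - e)‖ * ‖a * (1 - e)‖ = ‖(1 - e) * (star a * a) * (1 - e)‖ := by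
    rw [← CStarRing.norm_star_mul_self (x := a * (1 - e)), star_mul, h1e.star_eq]
    congr 1
    noncomm_ring
  -- main estimate
  have step3 : ‖(1 - e) * (star a * a) * (1 - e)‖ ≤ ‖m‖ + ε / 2 := by
    have hdecomp : (1 - e) * (star a * a) * (1 - e)
        = (1 - e) * m * (1 - e) - (1 - e) * b * (1 - e) := by
      rw [hbdef]; noncomm_ring
    have hb1 : ‖(1 - e) * b * (1 - e)‖ ≤ ε / 2 := by
      calc ‖(1 - e) * b * (1 - e)‖ = ‖(1 - e) * (b * (1 - e))‖ := by rw [mul_assoc]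
        _ ≤ ‖(1 : A) - e‖ * ‖b * (1 - e)‖ := norm_mul_le _ _
        _ ≤ 1 * (ε / 2) := by
            refine mul_le_mul hne hkey (norm_nonneg _) zero_le_one
        _ = ε / 2 := one_mul _
    have hm1 : ‖(1 - e) * m * (1 - e)‖ ≤ ‖m‖ := by
      calc ‖(1 - e) * m * (1 - e)‖ ≤ ‖(1 - e) * m‖ * ‖(1 : A) - e‖ := norm_mul_le _ _
        _ ≤ ‖(1 : A) - e‖ * ‖m‖ * ‖(1 : A) - e‖ := by
            refine mul_le_mul_of_nonneg_right (norm_mul_le _ _) (norm_nonneg _)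
        _ ≤ 1 * ‖m‖ * 1 := by
            refine mul_le_mul (mul_le_mul_of_nonneg_right hne (norm_nonneg _)) hne
              (norm_nonneg _) (by positivity)
        _ = ‖m‖ := by ring
    calc ‖(1 - e) * (star a * a) * (1 - e)‖
        ≤ ‖(1 - e) * m * (1 - e)‖ + ‖(1 - e) * b * (1 - e)‖ := by
          rw [hdecomp]; exact norm_sub_le _ _
      _ ≤ ‖m‖ + ε / 2 := add_le_add hm1 hb1
  have hfin : ‖K.qk a‖ * ‖K.qk a‖ ≤ ‖m‖ + ε / 2 := by
    calc ‖K.qk a‖ * ‖K.qk a‖ ≤ ‖a * (1 - e)‖ * ‖a * (1 - e)‖ :=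
        mul_le_mul step1 step1 (norm_nonneg _) (norm_nonneg _)
      _ = ‖(1 - e) * (star a * a) * (1 - e)‖ := step2
      _ ≤ ‖m‖ + ε / 2 := step3
  have : ‖star (K.qk a) * K.qk a‖ = ‖K.qk (star a * a)‖ := by rw [qk_mul, qk_star]
  rw [this]
  linarith

instance instCStarRing : CStarRing K.Q where
  norm_mul_self_le x := norm_q_sq_le K x

instance instCStarAlgebra : CStarAlgebra K.Q where
  __ := instNormedRing K
  __ := (inferInstance : StarRing K.Q)
  __ := (inferInstance : CompleteSpace K.Q)
  __ := instCStarRing K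
  __ := instNormedAlgebra K
  __ := (inferInstance : StarModule ℂ K.Q)

/-- The quotient map as a star algebra homomorphism. -/
def qkHom : A →⋆ₐ[ℂ] K.Q where
  toFun := K.qk
  map_one' := rfl
  map_mul' a b := qk_mul K a b
  map_zero' := rfl
  map_add' a b := qk_add K a b
  commutes' c := by
    show K.qk (algebraMap ℂ A c) = algebraMap ℂ K.Q c
    rw [Algebra.algebraMap_eq_smul_one, Algebra.algebraMap_eq_smul_one, qk_smul, qk_one]
  map_star' a := qk_star K a

lemma qkHom_apply (a : A) : K.qkHom a = K.qk a := rfl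

end ClosedStarIdeal


end

/-- For a C*-algebra `𝔄` and a star subalgebra `S ⊆ 𝔄`: every nonzero
closed two-sided ideal of `𝔄` has nonzero intersection with `S` if and only if every
*-homomorphism from `𝔄` into a C*-algebra whose restriction to `S` is injective is
isometric on all of `𝔄`. -/
theorem stmt4 {𝔄 : Type u} [CStarAlgebra 𝔄] (S : StarSubalgebra ℂ 𝔄) :
    (∀ I : TwoSidedIdeal 𝔄, IsClosed (I : Set 𝔄) → I ≠ ⊥ →
      ∃ x : 𝔄, x ∈ I ∧ x ∈ S ∧ x ≠ 0)
      ↔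
    (∀ (B : Type u) [CStarAlgebra B], ∀ π : 𝔄 →⋆ₐ[ℂ] B,
      Set.InjOn π (S : Set 𝔄) → Isometry π) := by
  constructor
  · intro hmeet B _ π hinj
    have hcont : Continuous π :=
      AddMonoidHomClass.continuous_of_bound π 1 <| by
        simpa only [one_mul] using NonUnitalStarAlgHom.norm_apply_le π
    have hker : IsClosed ((TwoSidedIdeal.ker π : TwoSidedIdeal 𝔄) : Set 𝔄) := by
      have : ((TwoSidedIdeal.ker π : TwoSidedIdeal 𝔄) : Set 𝔄) = π ⁻¹' {0} := by
        ext x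
        simp [TwoSidedIdeal.mem_ker, SetLike.mem_coe]
      rw [this]
      exact IsClosed.preimage hcont isClosed_singleton
    have hinj' : Function.Injective π := by
      rw [← TwoSidedIdeal.ker_eq_bot]
      by_contra hbot
      obtain ⟨x, hxk, hxS, hx0⟩ := hmeet _ hker hbot
      refine hx0 (hinj hxS S.zero_mem ?_)
      rw [TwoSidedIdeal.mem_ker] at hxk
      rw [hxk, map_zero]
    exact NonUnitalStarAlgHom.isometry π hinj'
  · intro hiso I hIc hIbot
    by_contra hno
    push_neg at hno
    set K : ClosedStarIdeal 𝔄 :=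
      ⟨I, hIc, fun a ha => star_mem_of_isClosed I hIc ha⟩ with hK
    have hinj : Set.InjOn (K.qkHom) (S : Set 𝔄) := by
      intro a ha b hb hab
      have h1 : a - b ∈ I := (ClosedStarIdeal.qk_eq_qk K).mp hab
      have h2 : a - b ∈ S := sub_mem ha hb
      exact sub_eq_zero.mp (hno _ h1 h2)
    have hiso' : Isometry K.qkHom := hiso K.Q K.qkHom hinj
    obtain ⟨x, hxI, hx0⟩ : ∃ x, x ∈ I ∧ x ≠ 0 := by
      by_contra h
      push_neg at h
      refine hIbot (SetLike.ext fun y => ?_)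
      simp only [TwoSidedIdeal.mem_bot]
      exact ⟨fun hy => h y hy, fun hy => hy ▸ zero_mem _⟩
    have hzero : K.qkHom x = 0 := by
      rw [ClosedStarIdeal.qkHom_apply, ClosedStarIdeal.qk_eq_zero]
      exact hxI
    exact hx0 (hiso'.injective (hzero.trans (map_zero K.qkHom).symm))
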